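/- Let G be an abelian group and let γ : G → Aut(G) be a map such that for all g, h ∈ G, γ(g)·γ(h) = γ(γ(h)(g) + h). If moreover γ(β(g)) = β ∘ γ(g) ∘ β⁻¹ for all g ∈ G and β ∈ Aut(G), then γ is a group homomorphism from G to Aut(G). -/

import Mathlib

theorem stmt_0 {G : Type*} [AddCommGroup G] (γ : G → AddAut G)
    (hcoc : ∀ g h : G, γ g + γ h = γ (γ h g + h))
    (hequiv : ∀ (β : AddAut G) (g : G), γ (β g) = β + γ g + -β) :
    ∀ g h : G, γ (g + h) = γ g + γ h := by
  have h0 : γ 0 = 0 := by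
    have h := hcoc 0 0
    simp only [map_zero, add_zero] at h
    exact add_right_cancel (by rw [h, zero_add])
  have key : ∀ g h : G, γ (g + h) = -(γ h) + γ g + γ h + γ h := by
    intro g h
    have h1 := hcoc ((-(γ h)) g) h
    have h2 := hequiv (-(γ h)) g
    have h3 : (γ h) ((-(γ h)) g) = g := by
      simp [AddAut.add_def, AddAut.neg_def]
    rw [h3] at h1
    rw [h2, neg_neg] at h1
    rw [← h1]
  have hneg : ∀ h : G, γ (-h) = γ h := by
    intro h
    have h1 := hequiv (AddEquiv.neg G : AddAut G) h
    have h2 : (AddEquiv.neg G : AddAut G) h = -h := rfl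
    rw [h2] at h1
    rw [h1]
    ext x
    simp [AddAut.add_def, AddAut.neg_def, AddEquiv.neg]
    show -((γ h) (-x)) = (γ h) x
    rw [map_neg, neg_neg]
  have hsq : ∀ x : G, γ x + γ x = 0 := by
    intro x
    have h1 := key x (-x)
    rw [hneg, add_neg_cancel, h0] at h1
    have : (γ x) + (-(γ x) + γ x + γ x + γ x) = γ x + 0 := by rw [← h1]
    simp only [← add_assoc, add_neg_cancel, zero_add, add_zero] at this
    have h2 : γ x + (γ x + γ x) = γ x + 0 := by rw [add_zero, ← add_assoc]; exact this
    exact add_left_cancel h2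
  intro g h
  have key2 : ∀ g h : G, γ (g + h) = γ h + γ g := by
    intro g h
    rw [key g h]
    have hinv : -(γ h) = γ h := by
      rw [eq_comm, eq_neg_iff_add_eq_zero, hsq]
    rw [hinv, add_assoc, hsq, add_zero]
  rw [add_comm, key2 h g]
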